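/- There do not exist a symmetric 2×2 integer matrix M with det M = ±1 and vectors a, b ∈ ℤ² such that aᵀMa = 8, aᵀMb = 10, and bᵀMb = 10. Equivalently, the rank-2 integral lattice with Gram matrix [[8,10],[10,10]] admits no embedding into any unimodular lattice of rank 2. -/

import Mathlib

/-- The rank-2 integral lattice with Gram matrix `[[8,10],[10,10]]` admits no
embedding into any unimodular lattice of rank 2: there are no symmetric
integer `2×2` matrix `M` with `det M = ±1` and vectors `a, b ∈ ℤ²` with
`aᵀMa = 8`, `aᵀMb = 10`, `bᵀMb = 10`. -/
theorem no_unimodular_embedding_of_su4_anomaly_lattice :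
    ¬ ∃ (M : Matrix (Fin 2) (Fin 2) ℤ) (a b : Fin 2 → ℤ),
        M.IsSymm ∧ (M.det = 1 ∨ M.det = -1) ∧
        dotProduct a (M.mulVec a) = 8 ∧
        dotProduct a (M.mulVec b) = 10 ∧
        dotProduct b (M.mulVec b) = 10 := by
  rintro ⟨M, a, b, hsym, hdet, haa, hab, hbb⟩
  have hM : M 1 0 = M 0 1 := by
    have := congrFun (congrFun hsym 0) 1
    simpa [Matrix.transpose_apply] using this
  rw [Matrix.det_fin_two] at hdet
  simp only [dotProduct, Matrix.mulVec, dotProduct,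
    Fin.sum_univ_two] at haa hab hbb
  set d : ℤ := a 0 * b 1 - a 1 * b 0 with hd
  have key : (a 0 * (M 0 0 * a 0 + M 0 1 * a 1) + a 1 * (M 1 0 * a 0 + M 1 1 * a 1)) *
      (b 0 * (M 0 0 * b 0 + M 0 1 * b 1) + b 1 * (M 1 0 * b 0 + M 1 1 * b 1)) -
      (a 0 * (M 0 0 * b 0 + M 0 1 * b 1) + a 1 * (M 1 0 * b 0 + M 1 1 * b 1)) *
      (a 0 * (M 0 0 * b 0 + M 0 1 * b 1) + a 1 * (M 1 0 * b 0 + M 1 1 * b 1)) =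
      d * d * (M 0 0 * M 1 1 - M 0 1 * M 1 0) := by
    rw [hd, hM]; ring
  rw [haa, hab, hbb] at key
  rcases hdet with h | h <;> rw [h] at key
  · nlinarith [sq_nonneg d]
  · have h20 : d * d = 20 := by linarith
    have hub : d ≤ 4 := by nlinarith
    have hlb : -4 ≤ d := by nlinarith
    interval_cases d <;> omega
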